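/- If f : R^d → R is continuous, compactly supported, and even with respect to a hyperplane H (f ∘ σ = f for the reflection σ across H), and all spherical means of f centered on H vanish, then f ≡ 0. -/

import Mathlib

open MeasureTheory RealInnerProductSpace Metric Set
open scoped ENNReal NNReal Pointwise
set_option maxHeartbeats 1000000

noncomputable section

lemma gauss_quad {E : Type*} [NormedAddCommGroup E] [InnerProductSpace ℝ E]
    {t t' : ℝ} (ht : 0 < t) (ht' : 0 < t') (z a b : E) :
    t * ‖z - a‖^2 + t' * ‖z - b‖^2 =
      (t+t') * ‖z - ((t/(t+t')) • a + (t'/(t+t')) • b)‖^2 + (t*t'/(t+t')) * ‖a-b‖^2 := by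
  have hs : t + t' ≠ 0 := by positivity
  have h1 : (t/(t+t')) + (t'/(t+t')) = 1 := by field_simp
  have hz : z - ((t/(t+t')) • a + (t'/(t+t')) • b)
      = (t/(t+t')) • (z-a) + (t'/(t+t')) • (z-b) := by
    calc z - ((t/(t+t')) • a + (t'/(t+t')) • b)
        = ((t/(t+t')) + (t'/(t+t'))) • z - ((t/(t+t')) • a + (t'/(t+t')) • b) := by
          rw [h1, one_smul]
      _ = (t/(t+t')) • (z-a) + (t'/(t+t')) • (z-b) := by
          rw [add_smul, smul_sub, smul_sub]; abel
  have hab : a - b = (z - b) - (z - a) := by abel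
  have e1 : ‖(t/(t+t')) • (z-a) + (t'/(t+t')) • (z-b)‖^2
      = (t/(t+t'))^2 * ‖z-a‖^2 + 2*((t/(t+t'))*((t'/(t+t'))*⟪z-a, z-b⟫))
        + (t'/(t+t'))^2 * ‖z-b‖^2 := by
    rw [norm_add_sq_real, real_inner_smul_left, real_inner_smul_right, norm_smul, norm_smul,
      mul_pow, mul_pow, Real.norm_eq_abs, Real.norm_eq_abs, sq_abs, sq_abs]
  have e2 : ‖(z - b) - (z - a)‖^2 = ‖z-b‖^2 - 2*⟪z-a, z-b⟫ + ‖z-a‖^2 := by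
    rw [norm_sub_sq_real, real_inner_comm]
  rw [hz, hab, e1, e2]
  set A := ‖z-a‖^2; set B := ‖z-b‖^2; set C := ⟪z-a, z-b⟫
  field_simp
  ring

lemma polar_vanish {E : Type*} [NormedAddCommGroup E] [NormedSpace ℝ E]
    [MeasurableSpace E] [BorelSpace E] [FiniteDimensional ℝ E] [Nontrivial E]
    (μ : Measure E) [μ.IsAddHaarMeasure]
    (g : E → ℝ) (hg : Continuous g) (hgs : HasCompactSupport g)
    (hmean : ∀ r : ℝ, 0 < r →
      (∫ y : Metric.sphere (0 : E) 1, g (r • (y : E)) ∂μ.toSphere) = 0) :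
    ∫ z, g z ∂μ = 0 := by
  have hInt : Integrable g μ := hg.integrable_of_hasCompactSupport hgs
  have ms : MeasurableSet ({0}ᶜ : Set E) := (measurableSet_singleton _).compl
  set ν := μ.toSphere.prod (Measure.volumeIoiPow (Module.finrank ℝ E - 1)) with hν
  set G : Metric.sphere (0 : E) 1 × Set.Ioi (0:ℝ) → ℝ :=
    fun p => g ((p.2 : ℝ) • (p.1 : E)) with hG
  have hGcont : Continuous G := by
    apply hg.comp
    exact (continuous_subtype_val.comp continuous_snd).smul
      (continuous_subtype_val.comp continuous_fst)
  have hcomp : ∀ x : ({0}ᶜ : Set E), G (homeomorphUnitSphereProd E x) = g x.1 := by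
    intro x
    simp only [hG, homeomorphUnitSphereProd_apply_snd_coe,
      homeomorphUnitSphereProd_apply_fst_coe]
    congr 1
    exact smul_inv_smul₀ (norm_ne_zero_iff.2 x.2) x.1
  have hmp := μ.measurePreserving_homeomorphUnitSphereProd
  have h3 : Integrable (fun x : ({0}ᶜ : Set E) => g x.1) (μ.comap Subtype.val) := by
    have h4 : Integrable g (Measure.map Subtype.val (μ.comap (Subtype.val : ({0}ᶜ:Set E) → E))) := by
      rw [map_comap_subtype_coe ms]
      exact hInt.integrableOn
    exact (MeasurableEmbedding.subtype_coe ms).integrable_map_iff.mp h4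
  have hGint : Integrable G ν := by
    rw [← hmp.integrable_comp_emb (Homeomorph.measurableEmbedding _)]
    exact h3.congr (Filter.Eventually.of_forall fun x => (hcomp x).symm)
  have h1 : ∫ z, g z ∂μ = ∫ x : ({0}ᶜ : Set E), g x.1 ∂(μ.comap Subtype.val) := by
    rw [integral_subtype_comap ms, restrict_compl_singleton]
  have h2 : ∫ x : ({0}ᶜ : Set E), g x.1 ∂(μ.comap Subtype.val) = ∫ p, G p ∂ν := by
    rw [← hmp.integral_comp (Homeomorph.measurableEmbedding _) G]
    exact integral_congr_ae (Filter.Eventually.of_forall fun x => (hcomp x).symm)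
  rw [h1, h2, integral_prod_symm G hGint]
  have h5 : ∀ r : Set.Ioi (0:ℝ), (∫ y : Metric.sphere (0:E) 1, G (y, r) ∂μ.toSphere) = 0 :=
    fun r => hmean r r.2
  simp only [h5, integral_zero]

/-- Spherical mean of `f` over the sphere of center `x` and radius `r`. -/
def sphMean {d : ℕ} (f : EuclideanSpace ℝ (Fin d) → ℝ)
    (x : EuclideanSpace ℝ (Fin d)) (r : ℝ) : ℝ :=
  ⨍ y : Metric.sphere (0 : EuclideanSpace ℝ (Fin d)) 1,
    f (x + r • (y : EuclideanSpace ℝ (Fin d))) ∂((volume : Measure (EuclideanSpace ℝ (Fin d))).toSphere)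

theorem even_function_with_vanishing_means_is_zero (d : ℕ)
    (v : EuclideanSpace ℝ (Fin d)) (hv : ‖v‖ = 1) (c : ℝ)
    (H : Set (EuclideanSpace ℝ (Fin d))) (hH : H = {x | ⟪x, v⟫ = c})
    (σ : EuclideanSpace ℝ (Fin d) → EuclideanSpace ℝ (Fin d))
    (hσ : ∀ x, σ x = x - (2 * (⟪x, v⟫ - c)) • v)
    (f : EuclideanSpace ℝ (Fin d) → ℝ) (hf : Continuous f) (hsupp : HasCompactSupport f)
    (heven : ∀ x, f (σ x) = f x)
    (hvanish : ∀ x ∈ H, ∀ r : ℝ, 0 < r → sphMean f x r = 0) :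
    f = 0 := by
  classical
  haveI : Nontrivial (EuclideanSpace ℝ (Fin d)) := by
    refine nontrivial_of_ne v 0 fun h => ?_
    rw [h, norm_zero] at hv; exact one_ne_zero hv.symm
  have hvv : ⟪v, v⟫ = (1:ℝ) := by
    rw [real_inner_self_eq_norm_sq, hv]; norm_num
  -- the sphere measure has nonzero finite total mass
  have htReal : ((volume : Measure (EuclideanSpace ℝ (Fin d))).toSphere Set.univ).toReal ≠ 0 := by
    rw [Measure.toSphere_apply_univ]
    have h1 : (0:ℝ≥0∞) < Module.finrank ℝ (EuclideanSpace ℝ (Fin d)) * volume (Metric.ball (0:(EuclideanSpace ℝ (Fin d))) 1) := by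
      apply ENNReal.mul_pos
      · have h3 : (0:ℕ) < Module.finrank ℝ ((EuclideanSpace ℝ (Fin d))) := Module.finrank_pos
        exact fun h => by simp [Nat.cast_eq_zero.mp h] at h3
      · exact (measure_ball_pos _ _ one_pos).ne'
    have h2 : (Module.finrank ℝ (EuclideanSpace ℝ (Fin d)) : ℝ≥0∞) * volume (Metric.ball (0:(EuclideanSpace ℝ (Fin d))) 1) ≠ ⊤ :=
      ENNReal.mul_ne_top (ENNReal.natCast_ne_top _) measure_ball_lt_top.ne
    exact (ENNReal.toReal_pos h1.ne' h2).ne'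
  -- Step 1 : weighted integrals vanish
  have hkey : ∀ x0 : (EuclideanSpace ℝ (Fin d)), ⟪x0, v⟫ = c → ∀ w : ℝ → ℝ, Continuous w →
      ∫ z, f (x0 + z) * w ‖z‖ = 0 := by
    intro x0 hx0 w hw
    have hgc : Continuous fun z => f (x0 + z) * w ‖z‖ :=
      (hf.comp (continuous_const.add continuous_id)).mul (hw.comp continuous_norm)
    have hgs : HasCompactSupport fun z => f (x0 + z) * w ‖z‖ := by
      have h1 : HasCompactSupport fun z : (EuclideanSpace ℝ (Fin d)) => f (x0 + z) :=
        hsupp.comp_homeomorph (Homeomorph.addLeft x0)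
      exact h1.mul_right
    apply polar_vanish (volume : Measure (EuclideanSpace ℝ (Fin d))) _ hgc hgs
    intro r hr
    have h0 : sphMean f x0 r = 0 := hvanish x0 (by rw [hH]; exact hx0) r hr
    rw [sphMean, average_eq] at h0
    have hint : ∫ y : Metric.sphere (0:(EuclideanSpace ℝ (Fin d))) 1, f (x0 + r • (y:(EuclideanSpace ℝ (Fin d)))) ∂(volume : Measure (EuclideanSpace ℝ (Fin d))).toSphere = 0 := by
      rcases smul_eq_zero.mp h0 with h | h
      · exact absurd h (inv_ne_zero htReal)
      · exact h
    have hcong : ∀ y : Metric.sphere (0:(EuclideanSpace ℝ (Fin d))) 1,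
        f (x0 + r • (y:(EuclideanSpace ℝ (Fin d)))) * w ‖r • (y:(EuclideanSpace ℝ (Fin d)))‖ = f (x0 + r • (y:(EuclideanSpace ℝ (Fin d)))) * w r := by
      intro y
      rw [norm_smul, mem_sphere_zero_iff_norm.mp y.2, mul_one, Real.norm_eq_abs,
        abs_of_pos hr]
    calc ∫ y : Metric.sphere (0:(EuclideanSpace ℝ (Fin d))) 1, f (x0 + r • (y:(EuclideanSpace ℝ (Fin d)))) * w ‖r • (y:(EuclideanSpace ℝ (Fin d)))‖ ∂(volume : Measure (EuclideanSpace ℝ (Fin d))).toSphere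
        = ∫ y : Metric.sphere (0:(EuclideanSpace ℝ (Fin d))) 1, f (x0 + r • (y:(EuclideanSpace ℝ (Fin d)))) * w r ∂(volume : Measure (EuclideanSpace ℝ (Fin d))).toSphere :=
          integral_congr_ae (Filter.Eventually.of_forall hcong)
      _ = (∫ y : Metric.sphere (0:(EuclideanSpace ℝ (Fin d))) 1, f (x0 + r • (y:(EuclideanSpace ℝ (Fin d)))) ∂(volume : Measure (EuclideanSpace ℝ (Fin d))).toSphere) * w r :=
          integral_mul_const _ _
      _ = 0 := by rw [hint, zero_mul]
  -- the quotient map and the even representation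
  set Φ : (EuclideanSpace ℝ (Fin d)) → (EuclideanSpace ℝ (Fin d)) × ℝ :=
    fun y => (y - ⟪y, v⟫ • v, (⟪y, v⟫ - c)^2) with hΦ
  have hinnc : Continuous fun y : (EuclideanSpace ℝ (Fin d)) => ⟪y, v⟫ :=
    continuous_id.inner continuous_const
  have hΦc : Continuous Φ := by
    refine Continuous.prodMk ?_ ?_
    · exact continuous_id.sub (hinnc.smul continuous_const)
    · exact (hinnc.sub continuous_const).pow 2
  set gq : (EuclideanSpace ℝ (Fin d)) × ℝ → ℝ :=
    fun p => f (p.1 + (c + Real.sqrt p.2) • v) with hgq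
  have hgqc : Continuous gq :=
    hf.comp (continuous_fst.add
      ((continuous_const.add (Real.continuous_sqrt.comp continuous_snd)).smul continuous_const))
  have hgqPhi : ∀ y, gq (Φ y) = f y := by
    intro y
    simp only [hΦ, hgq]
    rw [Real.sqrt_sq_eq_abs]
    rcases le_or_gt c ⟪y, v⟫ with hcase | hcase
    · rw [abs_of_nonneg (by linarith)]
      have h1 : c + (⟪y, v⟫ - c) = ⟪y, v⟫ := by ring
      rw [h1]
      congr 1
      exact sub_add_cancel y _
    · rw [abs_of_neg (by linarith)]
      have h2 : y - ⟪y, v⟫ • v + (c + -(⟪y, v⟫ - c)) • v = σ y := by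
        rw [hσ y]
        have h3 : (c + -(⟪y, v⟫ - c)) • v = ⟪y, v⟫ • v - (2 * (⟪y, v⟫ - c)) • v := by
          rw [← sub_smul]; congr 1; ring
        rw [h3]
        abel
      rw [h2, heven y]
  -- gaussians
  set gauss : ℝ → (EuclideanSpace ℝ (Fin d)) → ((EuclideanSpace ℝ (Fin d)) × ℝ) → ℝ :=
    fun t x0 p => Real.exp (-(t * (‖p.1 + c • v - x0‖^2 + p.2))) with hgauss
  have hgaussc : ∀ t x0, Continuous (gauss t x0) := by
    intro t x0
    apply Real.continuous_exp.comp
    apply Continuous.neg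
    apply Continuous.mul continuous_const
    exact (((continuous_fst.add continuous_const).sub continuous_const).norm.pow 2).add
      continuous_snd
  have hgaussPhi : ∀ t x0, ⟪x0, v⟫ = c →
      ∀ y, gauss t x0 (Φ y) = Real.exp (-(t * ‖y - x0‖^2)) := by
    intro t x0 hx0 y
    simp only [hgauss, hΦ]
    have hw : ⟪y - ⟪y, v⟫ • v + c • v - x0, v⟫ = 0 := by
      rw [inner_sub_left, inner_add_left, inner_sub_left, real_inner_smul_left,
        real_inner_smul_left, hvv, hx0]
      ring
    have hy : y - x0 = (y - ⟪y, v⟫ • v + c • v - x0) + (⟪y, v⟫ - c) • v := by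
      rw [sub_smul]; abel
    have hnorm : ‖y - x0‖^2 = ‖y - ⟪y, v⟫ • v + c • v - x0‖^2 + (⟪y, v⟫ - c)^2 := by
      rw [hy, norm_add_sq_real, real_inner_smul_right, hw, mul_zero, mul_zero, add_zero,
        norm_smul, hv, mul_one, Real.norm_eq_abs, sq_abs]
    rw [hnorm]
  set gaussC : ℝ → (EuclideanSpace ℝ (Fin d)) → C((EuclideanSpace ℝ (Fin d)) × ℝ, ℝ) :=
    fun t x0 => ⟨gauss t x0, hgaussc t x0⟩ with hgaussC
  set Gen : Set C((EuclideanSpace ℝ (Fin d)) × ℝ, ℝ) :=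
    {q | ∃ t x0, 0 < t ∧ ⟪x0, v⟫ = c ∧ q = gaussC t x0} with hGen
  have hmulGen : ∀ q1 ∈ Gen, ∀ q2 ∈ Gen, ∃ α : ℝ, ∃ q3 ∈ Gen, q1 * q2 = α • q3 := by
    rintro q1 ⟨t, x0, ht, hx0, rfl⟩ q2 ⟨t', x0', ht', hx0', rfl⟩
    have hs : (0:ℝ) < t + t' := by linarith
    refine ⟨Real.exp (-(t*t'/(t+t') * ‖x0 - x0'‖^2)),
      gaussC (t+t') ((t/(t+t')) • x0 + (t'/(t+t')) • x0'),
      ⟨t+t', _, hs, ?_, rfl⟩, ?_⟩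
    · rw [inner_add_left, real_inner_smul_left, real_inner_smul_left, hx0, hx0']
      field_simp
    · ext p
      simp only [ContinuousMap.mul_apply, ContinuousMap.smul_apply, hgaussC,
        ContinuousMap.coe_mk, smul_eq_mul, hgauss]
      rw [← Real.exp_add, ← Real.exp_add]
      congr 1
      have hq := gauss_quad ht ht' (p.1 + c • v) x0 x0'
      linear_combination -hq
  -- span of gaussians and constants
  set W := Submodule.span ℝ ({(1 : C((EuclideanSpace ℝ (Fin d)) × ℝ, ℝ))} ∪ Gen) with hW
  have honeW : (1 : C((EuclideanSpace ℝ (Fin d)) × ℝ, ℝ)) ∈ W :=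
    Submodule.subset_span (Or.inl rfl)
  have hGenW : Gen ⊆ (W : Set C((EuclideanSpace ℝ (Fin d)) × ℝ, ℝ)) :=
    fun q hq => Submodule.subset_span (Or.inr hq)
  have hWmul : ∀ x y : C((EuclideanSpace ℝ (Fin d)) × ℝ, ℝ), x ∈ W → y ∈ W → x*y ∈ W := by
    have hset : ({(1 : C((EuclideanSpace ℝ (Fin d)) × ℝ, ℝ))} ∪ Gen) * ({1} ∪ Gen)
        ⊆ (W : Set C((EuclideanSpace ℝ (Fin d)) × ℝ, ℝ)) := by
      rintro x ⟨a, ha, b, hb, rfl⟩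
      show a * b ∈ (W : Set C((EuclideanSpace ℝ (Fin d)) × ℝ, ℝ))
      rcases ha with ha | ha
      · rw [Set.mem_singleton_iff] at ha
        rcases hb with hb | hb
        · rw [Set.mem_singleton_iff] at hb
          rw [ha, hb, one_mul]; exact honeW
        · rw [ha, one_mul]; exact hGenW hb
      · rcases hb with hb | hb
        · rw [Set.mem_singleton_iff] at hb
          rw [hb, mul_one]; exact hGenW ha
        · rcases hmulGen a ha b hb with ⟨α, q3, hq3, hEq⟩
          rw [hEq]
          exact W.smul_mem α (hGenW hq3)
    intro x y hx hy
    have hmm := Submodule.mul_mem_mul hx hy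
    have h2 : W * W ≤ W := by
      rw [hW, Submodule.span_mul_span]
      exact Submodule.span_le.mpr hset
    exact h2 hmm
  have hadjW : ∀ q ∈ Algebra.adjoin ℝ Gen, q ∈ W := by
    intro q hq
    have hle : Algebra.adjoin ℝ Gen ≤ W.toSubalgebra honeW hWmul :=
      Algebra.adjoin_le hGenW
    exact hle hq
  -- the linear functional vanishes on W
  have hIq : ∀ q : C((EuclideanSpace ℝ (Fin d)) × ℝ, ℝ),
      Integrable (fun y => f y * q (Φ y)) volume := by
    intro q
    apply Continuous.integrable_of_hasCompactSupport (hf.mul (q.continuous.comp hΦc))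
    exact hsupp.mul_right
  have hone0 : ∫ y, f y = 0 := by
    have h := hkey (c • v) (by rw [real_inner_smul_left, hvv]; ring) (fun _ => (1:ℝ))
      continuous_const
    simp only [mul_one] at h
    rwa [integral_add_left_eq_self] at h
  have hLgen : ∀ q ∈ Gen, ∫ y, f y * q (Φ y) = 0 := by
    rintro q ⟨t, x0, ht, hx0, rfl⟩
    have h1 : ∀ y, (gaussC t x0) (Φ y) = Real.exp (-(t * ‖y - x0‖^2)) := fun y =>
      hgaussPhi t x0 hx0 y
    calc ∫ y, f y * (gaussC t x0) (Φ y)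
        = ∫ y, f y * Real.exp (-(t * ‖y - x0‖^2)) := by simp only [h1]
      _ = ∫ z, f (x0 + z) * Real.exp (-(t * ‖z‖^2)) := by
          rw [← integral_add_left_eq_self (fun y => f y * Real.exp (-(t * ‖y - x0‖^2))) x0]
          simp only [add_sub_cancel_left]
      _ = 0 := hkey x0 hx0 (fun r => Real.exp (-(t * r^2)))
          (Real.continuous_exp.comp ((continuous_const.mul (continuous_id.pow 2)).neg))
  have hLW : ∀ q ∈ W, ∫ y, f y * q (Φ y) = 0 := by
    intro q hq
    induction hq using Submodule.span_induction with
    | mem x hx =>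
      rcases hx with hx | hx
      · rw [Set.mem_singleton_iff] at hx
        subst hx
        simp only [ContinuousMap.one_apply, mul_one]
        exact hone0
      · exact hLgen x hx
    | zero => simp
    | add x y hx hy ihx ihy =>
      simp only [ContinuousMap.add_apply, mul_add]
      rw [integral_add (hIq x) (hIq y), ihx, ihy, add_zero]
    | smul a x hx ih =>
      simp only [ContinuousMap.smul_apply, smul_eq_mul, mul_left_comm]
      rw [integral_const_mul, ih, mul_zero]
  -- Stone--Weierstrass setup
  have hKc : IsCompact (tsupport f) := hsupp
  set K' : Set ((EuclideanSpace ℝ (Fin d)) × ℝ) := Φ '' (tsupport f) with hK'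
  have hK'c : IsCompact K' := hKc.image hΦc
  haveI : CompactSpace K' := isCompact_iff_compactSpace.mp hK'c
  set ι : C(K', (EuclideanSpace ℝ (Fin d)) × ℝ) := ⟨Subtype.val, continuous_subtype_val⟩ with hι
  set ρ : C((EuclideanSpace ℝ (Fin d)) × ℝ, ℝ) →ₐ[ℝ] C(K', ℝ) :=
    ContinuousMap.compRightAlgHom ℝ ℝ ι with hρ
  have hperp : ∀ p : K', ⟪(p : (EuclideanSpace ℝ (Fin d)) × ℝ).1, v⟫ = 0 := by
    rintro ⟨p, hp⟩
    rcases hp with ⟨y, _, rfl⟩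
    simp only [hΦ]
    rw [inner_sub_left, real_inner_smul_left, hvv]
    ring
  have hval : ∀ (t : ℝ) (x0 : EuclideanSpace ℝ (Fin d)) (z : K'), (ρ (gaussC t x0)) z
      = Real.exp (-(t * (‖(z : (EuclideanSpace ℝ (Fin d)) × ℝ).1 + c • v - x0‖^2
          + (z : (EuclideanSpace ℝ (Fin d)) × ℝ).2))) := fun t x0 z => rfl
  have hmem : ∀ (t : ℝ) (x0 : EuclideanSpace ℝ (Fin d)), 0 < t → ⟪x0, v⟫ = c →
      (⇑(ρ (gaussC t x0)) : K' → ℝ) ∈ ((fun F : C(K', ℝ) => (F : K' → ℝ)) ''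
        ((Algebra.adjoin ℝ (ρ '' Gen) : Subalgebra ℝ C(K', ℝ)) : Set C(K', ℝ))) :=
    fun t x0 ht hx0 =>
      ⟨ρ (gaussC t x0), Algebra.subset_adjoin ⟨gaussC t x0, ⟨t, x0, ht, hx0, rfl⟩, rfl⟩, rfl⟩
  have hx0cv : ⟪c • v, v⟫ = c := by rw [real_inner_smul_left, hvv]; ring
  have hsep : (Algebra.adjoin ℝ (ρ '' Gen)).SeparatesPoints := by
    rintro ⟨⟨w1, m1⟩, hp⟩ ⟨⟨w2, m2⟩, hq⟩ hpq
    have hw1 : ⟪w1, v⟫ = 0 := hperp ⟨(w1, m1), hp⟩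
    have hw2 : ⟪w2, v⟫ = 0 := hperp ⟨(w2, m2), hq⟩
    by_cases hww : w1 = w2
    · have hmm : m1 ≠ m2 := by
        intro h
        apply hpq
        apply Subtype.ext
        rw [Prod.ext_iff]
        exact ⟨hww, h⟩
      refine ⟨_, hmem 1 (c • v) one_pos hx0cv, ?_⟩
      rw [hval, hval]
      intro hcontra
      apply hmm
      have h2 := Real.exp_eq_exp.mp hcontra
      dsimp only at h2
      rw [hww] at h2
      linarith [h2]
    · by_cases hcl : ‖w1‖^2 + m1 = ‖w2‖^2 + m2
      · refine ⟨_, hmem 1 (c • v + (w1 - w2)) one_pos ?_, ?_⟩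
        · rw [inner_add_left, real_inner_smul_left, hvv, inner_sub_left, hw1, hw2]
          ring
        · rw [hval, hval]
          intro hcontra
          have h2 := Real.exp_eq_exp.mp hcontra
          dsimp only at h2
          have e0 : w1 + c • v - (c • v + (w1 - w2)) = w2 := by abel
          have e0' : w2 + c • v - (c • v + (w1 - w2)) = w2 - (w1 - w2) := by abel
          rw [e0, e0'] at h2
          have e1 : ‖w2 - (w1 - w2)‖^2 = ‖w2‖^2 - 2*⟪w2, w1 - w2⟫ + ‖w1 - w2‖^2 :=
            norm_sub_sq_real _ _
          have e2 : ⟪w2, w1 - w2⟫ = ⟪w1, w2⟫ - ‖w2‖^2 := by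
            rw [inner_sub_right, real_inner_self_eq_norm_sq, real_inner_comm]
          have e3 : ‖w1 - w2‖^2 = ‖w1‖^2 - 2*⟪w1, w2⟫ + ‖w2‖^2 := norm_sub_sq_real _ _
          have hpos : 0 < ‖w1 - w2‖^2 :=
            pow_pos (norm_pos_iff.mpr (sub_ne_zero.mpr hww)) 2
          nlinarith [h2, e1, e2, e3, hcl, hpos]
      · refine ⟨_, hmem 1 (c • v) one_pos hx0cv, ?_⟩
        rw [hval, hval]
        intro hcontra
        have h2 := Real.exp_eq_exp.mp hcontra
        dsimp only at h2
        have e0 : w1 + c • v - c • v = w1 := by abel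
        have e0' : w2 + c • v - c • v = w2 := by abel
        rw [e0, e0'] at h2
        exact hcl (by nlinarith [h2])
  -- approximation and conclusion
  have hfint : Integrable f volume := hf.integrable_of_hasCompactSupport hsupp
  have hffint : Integrable (fun y => f y * f y) volume :=
    Continuous.integrable_of_hasCompactSupport (hf.mul hf) hsupp.mul_right
  have habs : Integrable (fun y => |f y|) volume := hfint.abs
  have hup : ∀ ε : ℝ, 0 < ε → (∫ y, f y * f y) ≤ ε * ∫ y, |f y| := by
    intro ε hε
    obtain ⟨⟨q', hq'⟩, hnorm⟩ :=
      ContinuousMap.exists_mem_subalgebra_near_continuousMap_of_separatesPoints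
        (Algebra.adjoin ℝ (ρ '' Gen)) hsep (ρ ⟨gq, hgqc⟩) ε hε
    rw [← AlgHom.map_adjoin, Subalgebra.mem_map] at hq'
    obtain ⟨Q, hQ, rfl⟩ := hq'
    have hQW : Q ∈ W := hadjW Q hQ
    have hL0 : ∫ y, f y * Q (Φ y) = 0 := hLW Q hQW
    have hbound : ∀ y, f y * f y - f y * Q (Φ y) ≤ |f y| * ε := by
      intro y
      by_cases hy : y ∈ tsupport f
      · have hz : Φ y ∈ K' := Set.mem_image_of_mem Φ hy
        have h1 : |Q (Φ y) - gq (Φ y)| < ε := by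
          have hb := ContinuousMap.norm_coe_le_norm (ρ Q - ρ ⟨gq, hgqc⟩) ⟨Φ y, hz⟩
          have hb2 : (ρ Q - ρ ⟨gq, hgqc⟩) (⟨Φ y, hz⟩ : K') = Q (Φ y) - gq (Φ y) := rfl
          rw [hb2, Real.norm_eq_abs] at hb
          exact lt_of_le_of_lt hb hnorm
        have h3 : gq (Φ y) = f y := hgqPhi y
        rw [h3] at h1
        calc f y * f y - f y * Q (Φ y) = f y * (f y - Q (Φ y)) := by ring
          _ ≤ |f y * (f y - Q (Φ y))| := le_abs_self _
          _ = |f y| * |f y - Q (Φ y)| := abs_mul _ _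
          _ ≤ |f y| * ε := by
              refine mul_le_mul_of_nonneg_left ?_ (abs_nonneg _)
              rw [abs_sub_comm]
              exact le_of_lt h1
      · have hy0 : f y = 0 := image_eq_zero_of_notMem_tsupport hy
        simp [hy0]
    calc (∫ y, f y * f y) = (∫ y, f y * f y) - (∫ y, f y * Q (Φ y)) := by rw [hL0, sub_zero]
      _ = ∫ y, (f y * f y - f y * Q (Φ y)) := (integral_sub hffint (hIq Q)).symm
      _ ≤ ∫ y, |f y| * ε := integral_mono (hffint.sub (hIq Q)) (habs.mul_const ε) hbound
      _ = ε * ∫ y, |f y| := by rw [integral_mul_const, mul_comm]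
  have hff0 : (∫ y, f y * f y) = 0 := by
    have hnn : (0:ℝ) ≤ ∫ y, f y * f y := integral_nonneg fun y => mul_self_nonneg _
    have hC : (0:ℝ) ≤ ∫ y, |f y| := integral_nonneg fun y => abs_nonneg _
    set A := ∫ y, f y * f y with hA
    set C := ∫ y, |f y| with hCdef
    by_contra hne
    have hpos : 0 < A := lt_of_le_of_ne hnn (Ne.symm hne)
    have h1 := hup (A / (C+1)) (by positivity)
    have h2 : A / (C+1) * C = A * (C / (C+1)) := by ring
    have h3 : C / (C+1) < 1 := by
      rw [div_lt_one (by positivity)]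
      linarith
    have h4 : A * (C / (C+1)) < A := by
      nlinarith [mul_lt_mul_of_pos_left h3 hpos]
    linarith [h1, h2.symm ▸ h1]
  have hae : (fun y => f y * f y) =ᵐ[(volume : Measure (EuclideanSpace ℝ (Fin d)))] 0 :=
    (integral_eq_zero_iff_of_nonneg (fun y => mul_self_nonneg (f y)) hffint).mp hff0
  have heq : (fun y => f y * f y) = (0 : (EuclideanSpace ℝ (Fin d)) → ℝ) :=
    (Continuous.ae_eq_iff_eq (volume : Measure (EuclideanSpace ℝ (Fin d)))
      (hf.mul hf) continuous_zero).mp hae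
  funext y
  have hy := congrFun heq y
  exact mul_self_eq_zero.mp hy



end
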